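/- Let ρ, σ be nonzero positive semidefinite operators on a finite-dimensional Hilbert space ℋ. Then the max-relative entropy satisfies D∞(ρ‖σ) = log max{ (Tr ρτ)/(Tr στ) : τ a density operator on ℋ with supp(τ) ⊆ supp(σ) } (with the convention that the maximum is +∞ if supp(ρ) ⊄ supp(σ)). -/

import Mathlib

open Matrix
open scoped ComplexOrder ENNReal

section Aux
variable {d : ℕ}


lemma trace_mul_vecMulVec (A : Matrix (Fin d) (Fin d) ℂ) (w : Fin d → ℂ) :
    (A * vecMulVec w (star w)).trace = star w ⬝ᵥ A *ᵥ w := by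
  simp only [trace, diag, mul_apply, vecMulVec_apply, dotProduct, mulVec, Pi.star_apply,
    Finset.mul_sum]
  congr 1; ext i; congr 1; ext j; ring

lemma psd_vecMulVec (w : Fin d → ℂ) : (vecMulVec w (star w)).PosSemidef := by
  refine Matrix.PosSemidef.of_dotProduct_mulVec_nonneg ?_ ?_
  · ext i j
    simp [conjTranspose_apply, vecMulVec_apply, mul_comm]
  · intro x
    have : star x ⬝ᵥ (vecMulVec w (star w)) *ᵥ x = star (star w ⬝ᵥ x) * (star w ⬝ᵥ x) := by
      simp only [dotProduct, mulVec, vecMulVec_apply, Pi.star_apply, star_sum, star_mul',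
        star_star, Finset.mul_sum, Finset.sum_mul]
      rw [Finset.sum_comm]
      congr 1; ext i; congr 1; ext j; ring
    rw [this]
    exact star_mul_self_nonneg _

lemma vecMulVec_mulVec' (w u : Fin d → ℂ) :
    (vecMulVec w (star w)) *ᵥ u = (star w ⬝ᵥ u) • w := by
  ext i
  simp only [mulVec, vecMulVec_apply, dotProduct, Pi.star_apply, Pi.smul_apply, smul_eq_mul,
    Finset.sum_mul, Finset.mul_sum]
  congr 1; ext j; ring


lemma psd_diag_nonneg {A : Matrix (Fin d) (Fin d) ℂ} (hA : A.PosSemidef) (i : Fin d) :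
    0 ≤ A i i := by
  have := hA.dotProduct_mulVec_nonneg (Pi.single i 1)
  simpa [mulVec_single, dotProduct, Pi.single_apply] using this

lemma psd_trace_nonneg {A : Matrix (Fin d) (Fin d) ℂ} (hA : A.PosSemidef) :
    0 ≤ A.trace :=
  Finset.sum_nonneg fun i _ => psd_diag_nonneg hA i

lemma psd_trace_eq_zero {A : Matrix (Fin d) (Fin d) ℂ} (hA : A.PosSemidef)
    (h : A.trace = 0) : A = 0 := by
  have hd : ∀ i, A i i = 0 := by
    intro i
    have h1 : ∀ j ∈ Finset.univ, (0:ℂ) ≤ A j j := fun j _ => psd_diag_nonneg hA j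
    exact (Finset.sum_eq_zero_iff_of_nonneg h1).1 h i (Finset.mem_univ i)
  -- columns vanish
  ext i j
  have hcol : A *ᵥ (Pi.single j 1) = 0 := by
    rw [← hA.dotProduct_mulVec_zero_iff]
    simpa [mulVec_single, dotProduct, Pi.single_apply] using hd j
  have := congr_fun hcol i
  simpa [mulVec_single] using this

open scoped MatrixOrder in
noncomputable def Matrix.PosSemidef.sqrt {A : Matrix (Fin d) (Fin d) ℂ} (_hA : A.PosSemidef) :
    Matrix (Fin d) (Fin d) ℂ := CFC.sqrt A

open scoped MatrixOrder in
lemma Matrix.PosSemidef.posSemidef_sqrt {A : Matrix (Fin d) (Fin d) ℂ} (hA : A.PosSemidef) :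
    hA.sqrt.PosSemidef := Matrix.nonneg_iff_posSemidef.mp (CFC.sqrt_nonneg A)

open scoped MatrixOrder in
lemma Matrix.PosSemidef.sqrt_mul_self {A : Matrix (Fin d) (Fin d) ℂ} (hA : A.PosSemidef) :
    hA.sqrt * hA.sqrt = A := CFC.sqrt_mul_sqrt_self A (Matrix.nonneg_iff_posSemidef.mpr hA)

lemma spectral_theorem' {σ : Matrix (Fin d) (Fin d) ℂ} (h : σ.IsHermitian) :
    σ = (h.eigenvectorUnitary : Matrix (Fin d) (Fin d) ℂ) *
      diagonal (RCLike.ofReal ∘ h.eigenvalues) *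
      star (h.eigenvectorUnitary : Matrix (Fin d) (Fin d) ℂ) := by
  conv_lhs => rw [h.spectral_theorem]
  rfl

lemma psd_trace_mul_nonneg {A B : Matrix (Fin d) (Fin d) ℂ} (hA : A.PosSemidef)
    (hB : B.PosSemidef) : 0 ≤ (A * B).trace := by
  have hs := hB.posSemidef_sqrt
  have h1 : A * B = A * hB.sqrt * hB.sqrt := by rw [mul_assoc, hB.sqrt_mul_self]
  rw [h1, trace_mul_cycle]
  have h2 : hB.sqrt * A * hB.sqrt = hB.sqrtᴴ * A * hB.sqrt := by rw [hs.isHermitian.eq]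
  have := (hA.conjTranspose_mul_mul_same hB.sqrt)
  rw [h2]
  exact psd_trace_nonneg this



lemma psd_mul_eq_zero_of_trace {σ τ : Matrix (Fin d) (Fin d) ℂ} (hσ : σ.PosSemidef)
    (hτ : τ.PosSemidef) (h : (σ * τ).trace = 0) : σ * τ = 0 := by
  let B := hσ.sqrt
  let C := hτ.sqrt
  have hBh : Bᴴ = B := hσ.posSemidef_sqrt.isHermitian.eq
  have hCh : Cᴴ = C := hτ.posSemidef_sqrt.isHermitian.eq
  have key : (B * C) * (B * C)ᴴ = 0 := by
    have h1 : (B * C) * (B * C)ᴴ = B * (C * C) * B := by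
      rw [conjTranspose_mul, hBh, hCh]; noncomm_ring
    have h2 : ((B * C) * (B * C)ᴴ).trace = (σ * τ).trace := by
      rw [h1, trace_mul_cycle, show B * B * (C * C) = (B * B) * (C * C) from rfl,
        hσ.sqrt_mul_self, hτ.sqrt_mul_self]
    exact psd_trace_eq_zero (posSemidef_self_mul_conjTranspose _) (h2.trans h)
  have hBC : B * C = 0 := self_mul_conjTranspose_eq_zero.mp key
  calc σ * τ = B * (B * C) * C := by
        have : B * (B * C) * C = (B * B) * (C * C) := by noncomm_ring
        rw [this, hσ.sqrt_mul_self, hτ.sqrt_mul_self]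
    _ = 0 := by rw [hBC, mul_zero, zero_mul]

lemma psd_trace_mul_pos {σ τ : Matrix (Fin d) (Fin d) ℂ} (hσ : σ.PosSemidef)
    (hτ : τ.PosSemidef) (htr : τ.trace = 1)
    (hsupp : ∀ v : Fin d → ℂ, σ.mulVec v = 0 → τ.mulVec v = 0) :
    σ * τ ≠ 0 := by
  intro h0
  have hττ : τ * τ = 0 := by
    ext i j
    have hcol : σ *ᵥ (fun k => τ k j) = 0 := by
      ext i'
      have := congr_fun (congr_fun h0 i') j
      simpa [mul_apply, mulVec, dotProduct] using this
    have := congr_fun (hsupp _ hcol) i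
    simpa [mulVec, dotProduct, mul_apply] using this
  have : τ = 0 := by
    have := conjTranspose_mul_self_eq_zero (A := τ)
    rw [hτ.isHermitian.eq] at this
    exact this.mp hττ
  rw [this, trace_zero] at htr
  exact one_ne_zero htr.symm


noncomputable def suppProj {σ : Matrix (Fin d) (Fin d) ℂ} (h : σ.IsHermitian) :
    Matrix (Fin d) (Fin d) ℂ :=
  (h.eigenvectorUnitary : Matrix (Fin d) (Fin d) ℂ) *
    diagonal (fun i => if h.eigenvalues i = 0 then (0:ℂ) else 1) *
    star (h.eigenvectorUnitary : Matrix (Fin d) (Fin d) ℂ)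

lemma suppProj_herm {σ : Matrix (Fin d) (Fin d) ℂ} (h : σ.IsHermitian) :
    (suppProj h)ᴴ = suppProj h := by
  unfold suppProj
  rw [conjTranspose_mul, conjTranspose_mul, diagonal_conjTranspose]
  have h2 : star (fun i => if h.eigenvalues i = 0 then (0:ℂ) else 1)
      = fun i => if h.eigenvalues i = 0 then (0:ℂ) else 1 := by
    ext i; by_cases hi : h.eigenvalues i = 0 <;> simp [hi]
  rw [h2]
  simp only [star_eq_conjTranspose, conjTranspose_conjTranspose, mul_assoc]

lemma star_mul_self_unitary {σ : Matrix (Fin d) (Fin d) ℂ} (h : σ.IsHermitian) :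
    star (h.eigenvectorUnitary : Matrix (Fin d) (Fin d) ℂ) *
      (h.eigenvectorUnitary : Matrix (Fin d) (Fin d) ℂ) = 1 :=
  Matrix.mem_unitaryGroup_iff'.mp h.eigenvectorUnitary.2

lemma mul_suppProj {σ : Matrix (Fin d) (Fin d) ℂ} (h : σ.IsHermitian) :
    σ * suppProj h = σ := by
  unfold suppProj
  calc σ * ((h.eigenvectorUnitary : Matrix (Fin d) (Fin d) ℂ) *
        diagonal (fun i => if h.eigenvalues i = 0 then (0:ℂ) else 1) *
        star (h.eigenvectorUnitary : Matrix (Fin d) (Fin d) ℂ))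
      = ((h.eigenvectorUnitary : Matrix (Fin d) (Fin d) ℂ) *
          diagonal (RCLike.ofReal ∘ h.eigenvalues) *
          star (h.eigenvectorUnitary : Matrix (Fin d) (Fin d) ℂ)) *
        ((h.eigenvectorUnitary : Matrix (Fin d) (Fin d) ℂ) *
          diagonal (fun i => if h.eigenvalues i = 0 then (0:ℂ) else 1) *
          star (h.eigenvectorUnitary : Matrix (Fin d) (Fin d) ℂ)) := by
        rw [← spectral_theorem' h]
    _ = (h.eigenvectorUnitary : Matrix (Fin d) (Fin d) ℂ) *
          (diagonal (RCLike.ofReal ∘ h.eigenvalues) *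
            diagonal (fun i => if h.eigenvalues i = 0 then (0:ℂ) else 1)) *
          star (h.eigenvectorUnitary : Matrix (Fin d) (Fin d) ℂ) := by
        have hUU := star_mul_self_unitary h
        simp only [mul_assoc]
        rw [← mul_assoc (star (h.eigenvectorUnitary : Matrix (Fin d) (Fin d) ℂ))
          (h.eigenvectorUnitary : Matrix (Fin d) (Fin d) ℂ), hUU, one_mul]
    _ = σ := by
        rw [diagonal_mul_diagonal]
        have h3 : (fun i => (RCLike.ofReal ∘ h.eigenvalues) i *
            (if h.eigenvalues i = 0 then (0:ℂ) else 1)) = (RCLike.ofReal ∘ h.eigenvalues) := by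
          ext i; by_cases hi : h.eigenvalues i = 0 <;> simp [hi]
        rw [h3, ← spectral_theorem' h]

lemma suppProj_mulVec_eq_zero {σ : Matrix (Fin d) (Fin d) ℂ} (h : σ.IsHermitian)
    {u : Fin d → ℂ} (hu : σ *ᵥ u = 0) : suppProj h *ᵥ u = 0 := by
  set U := (h.eigenvectorUnitary : Matrix (Fin d) (Fin d) ℂ) with hU
  set y := star U *ᵥ u with hy
  have hDy : diagonal (RCLike.ofReal ∘ h.eigenvalues) *ᵥ y = 0 := by
    have h1 : U *ᵥ diagonal (RCLike.ofReal ∘ h.eigenvalues) *ᵥ y = 0 := by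
      rw [hy, mulVec_mulVec, mulVec_mulVec, ← spectral_theorem' h, hu]
    have h2 := congrArg (fun z => star U *ᵥ z) h1
    simpa [mulVec_mulVec, ← mul_assoc, hU, star_mul_self_unitary h] using h2
  have hD'y : diagonal (fun i => if h.eigenvalues i = 0 then (0:ℂ) else 1) *ᵥ y = 0 := by
    ext i
    have h2 := congr_fun hDy i
    simp only [mulVec_diagonal, Function.comp_apply, Pi.zero_apply] at h2 ⊢
    by_cases hi : h.eigenvalues i = 0
    · simp [hi]
    · have hne : ((h.eigenvalues i : ℂ)) ≠ 0 := by simpa using hi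
      have hyi : y i = 0 := by
        rcases mul_eq_zero.mp h2 with h3 | h3
        · exact absurd h3 hne
        · exact h3
      simp [hi, hyi]
  unfold suppProj
  rw [← hU, ← mulVec_mulVec, ← mulVec_mulVec, ← hy, hD'y, mulVec_zero]

lemma complex_nonneg_iff {z : ℂ} : 0 ≤ z ↔ 0 ≤ z.re ∧ z.im = 0 := by
  rw [Complex.le_def]; simp [eq_comm]

lemma psd_smul {A : Matrix (Fin d) (Fin d) ℂ} (hA : A.PosSemidef) {r : ℝ} (hr : 0 ≤ r) :
    ((r : ℂ) • A).PosSemidef := by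
  refine Matrix.PosSemidef.of_dotProduct_mulVec_nonneg ?_ ?_
  · show ((r:ℂ) • A)ᴴ = (r:ℂ) • A
    rw [conjTranspose_smul, hA.isHermitian.eq, Complex.star_def, Complex.conj_ofReal]
  · intro x
    rw [smul_mulVec, dotProduct_smul]
    exact mul_nonneg (by rw [complex_nonneg_iff]; simp [hr]) (hA.dotProduct_mulVec_nonneg x)

lemma herm_dotProduct_real {A : Matrix (Fin d) (Fin d) ℂ} (hA : A.IsHermitian)
    (v : Fin d → ℂ) : (star v ⬝ᵥ A *ᵥ v).im = 0 := by
  have h1 : star (star v ⬝ᵥ A *ᵥ v) = star v ⬝ᵥ A *ᵥ v := by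
    calc star (star v ⬝ᵥ A *ᵥ v) = star (A *ᵥ v) ⬝ᵥ v := by
          rw [← star_dotProduct_star, star_star]
      _ = (star v ᵥ* Aᴴ) ⬝ᵥ v := by rw [star_mulVec]
      _ = star v ⬝ᵥ Aᴴ *ᵥ v := by rw [dotProduct_mulVec]
      _ = star v ⬝ᵥ A *ᵥ v := by rw [hA.eq]
  have h2 := congrArg Complex.im h1
  simp only [Complex.star_def, Complex.conj_im] at h2
  linarith

lemma mul_eq_zero_of_supp {A B C : Matrix (Fin d) (Fin d) ℂ}
    (h : ∀ v : Fin d → ℂ, A *ᵥ v = 0 → B *ᵥ v = 0) (hAC : A * C = 0) : B * C = 0 := by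
  ext i j
  have hcol : A *ᵥ (fun k => C k j) = 0 := by
    ext i'
    have := congr_fun (congr_fun hAC i') j
    simpa [mul_apply, mulVec, dotProduct] using this
  have := congr_fun (h _ hcol) i
  simpa [mulVec, dotProduct, mul_apply] using this

end Aux

/-- Max-relative entropy `D∞(ρ‖σ) := inf {λ : ρ ≤ e^λ σ}` (Löwner order), as an extended real
number (`+∞` if no such `λ` exists). -/
noncomputable def DmaxE {d : ℕ} (ρ σ : Matrix (Fin d) (Fin d) ℂ) : EReal :=
  sInf ((fun l : ℝ => (l : EReal)) '' {l : ℝ | (Real.exp l • σ - ρ).PosSemidef})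

open Classical in
/-- The max-relative entropy equals the logarithm of the maximal ratio `Tr ρτ / Tr στ` over
density operators `τ` supported in the support of `σ` (the ratio being taken in `ℝ≥0∞`, so that
`a / 0 = ∞` for `a ≠ 0`), with the convention that it is `+∞` if `supp ρ ⊄ supp σ`. -/
theorem stmt2 {d : ℕ} (ρ σ : Matrix (Fin d) (Fin d) ℂ)
    (hρ : ρ.PosSemidef) (hσ : σ.PosSemidef) (hρ0 : ρ ≠ 0) (hσ0 : σ ≠ 0) :
    DmaxE ρ σ =
      if ∀ v : Fin d → ℂ, σ.mulVec v = 0 → ρ.mulVec v = 0 then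
        ENNReal.log (⨆ τ ∈ {τ : Matrix (Fin d) (Fin d) ℂ | τ.PosSemidef ∧ τ.trace = 1 ∧
            ∀ v : Fin d → ℂ, σ.mulVec v = 0 → τ.mulVec v = 0},
          ENNReal.ofReal ((ρ * τ).trace.re) / ENNReal.ofReal ((σ * τ).trace.re))
      else (⊤ : EReal) := by
  by_cases h : ∀ v : Fin d → ℂ, σ.mulVec v = 0 → ρ.mulVec v = 0
  case neg =>
    rw [if_neg h]
    push_neg at h
    obtain ⟨v, hv1, hv2⟩ := h
    have hempty : {l : ℝ | (Real.exp l • σ - ρ).PosSemidef} = ∅ := by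
      ext l
      simp only [Set.mem_setOf_eq, Set.mem_empty_iff_false, iff_false]
      intro hl
      have h0 := hl.dotProduct_mulVec_nonneg v
      have heq : star v ⬝ᵥ (Real.exp l • σ - ρ) *ᵥ v = -(star v ⬝ᵥ ρ *ᵥ v) := by
        rw [sub_mulVec, smul_mulVec, hv1, smul_zero, zero_sub, dotProduct_neg]
      rw [heq] at h0
      have h1 : star v ⬝ᵥ ρ *ᵥ v ≤ 0 := neg_nonneg.mp h0
      have h2 := hρ.dotProduct_mulVec_nonneg v
      exact hv2 ((hρ.dotProduct_mulVec_zero_iff v).mp (le_antisymm h1 h2))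
    unfold DmaxE
    rw [hempty, Set.image_empty, sInf_empty]
  case pos =>
    rw [if_pos h]
    set T : Set (Matrix (Fin d) (Fin d) ℂ) := {τ : Matrix (Fin d) (Fin d) ℂ | τ.PosSemidef ∧
      τ.trace = 1 ∧ ∀ v : Fin d → ℂ, σ.mulVec v = 0 → τ.mulVec v = 0} with hT
    set F : Matrix (Fin d) (Fin d) ℂ → ℝ≥0∞ := fun τ =>
      ENNReal.ofReal ((ρ * τ).trace.re) / ENNReal.ofReal ((σ * τ).trace.re) with hF
    set s : ℝ≥0∞ := ⨆ τ ∈ T, F τ with hs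
    -- lower bound direction: every feasible l dominates log s
    have h_ge : ∀ l : ℝ, (Real.exp l • σ - ρ).PosSemidef → ENNReal.log s ≤ (l : EReal) := by
      intro l hl
      have hsup : s ≤ ENNReal.ofReal (Real.exp l) := by
        rw [hs]
        refine iSup₂_le fun τ hτ => ?_
        obtain ⟨hτpsd, hτtr, hτsupp⟩ := hτ
        have hbC : 0 ≤ (σ * τ).trace := psd_trace_mul_nonneg hσ hτpsd
        have hbne : (σ * τ).trace ≠ 0 := fun h0 =>
          psd_trace_mul_pos hσ hτpsd hτtr hτsupp (psd_mul_eq_zero_of_trace hσ hτpsd h0)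
        have hbpos : 0 < (σ * τ).trace.re := by
          rcases (complex_nonneg_iff.mp hbC) with ⟨hre, him⟩
          rcases lt_or_eq_of_le hre with h' | h'
          · exact h'
          · exact absurd (Complex.ext h'.symm him) hbne
        -- key inequality
        have hkey : (ρ * τ).trace.re ≤ Real.exp l * (σ * τ).trace.re := by
          have h0 : 0 ≤ ((Real.exp l • σ - ρ) * τ).trace :=
            psd_trace_mul_nonneg hl hτpsd
          have hexp : ((Real.exp l • σ - ρ) * τ).trace
              = (Real.exp l : ℂ) * (σ * τ).trace - (ρ * τ).trace := by
            rw [Matrix.sub_mul, trace_sub, Matrix.smul_mul, trace_smul]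
            simp [Complex.real_smul]
          rw [hexp] at h0
          rcases complex_nonneg_iff.mp h0 with ⟨hre, _⟩
          simp only [Complex.sub_re, Complex.mul_re, Complex.ofReal_re, Complex.ofReal_im,
            zero_mul, sub_zero] at hre
          linarith
        rw [hF]
        rw [ENNReal.div_le_iff (by simp [hbpos]) ENNReal.ofReal_ne_top]
        rw [← ENNReal.ofReal_mul (Real.exp_pos l).le]
        exact ENNReal.ofReal_le_ofReal hkey
      calc ENNReal.log s ≤ ENNReal.log (ENNReal.ofReal (Real.exp l)) :=
            ENNReal.log_monotone hsup
        _ = (l : EReal) := by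
            rw [ENNReal.log_ofReal_of_pos (Real.exp_pos l), Real.log_exp]
    -- upper bound direction (contrapositive)
    have h_lt : ∀ x : ℝ, ¬ (Real.exp x • σ - ρ).PosSemidef → (x : EReal) ≤ ENNReal.log s := by
      intro x hx
      have hM : (Real.exp x • σ - ρ).IsHermitian := by
        have h1 : (Real.exp x • σ)ᴴ = Real.exp x • σᴴ := by
          rw [conjTranspose_smul, star_trivial]
        show (Real.exp x • σ - ρ)ᴴ = _
        rw [conjTranspose_sub, h1, hσ.isHermitian.eq, hρ.isHermitian.eq]
      obtain ⟨v, hv⟩ : ∃ v : Fin d → ℂ, ¬ (0 ≤ star v ⬝ᵥ (Real.exp x • σ - ρ) *ᵥ v) := by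
        by_contra hall
        push_neg at hall
        exact hx (Matrix.PosSemidef.of_dotProduct_mulVec_nonneg hM hall)
      have him := herm_dotProduct_real hM v
      have hqlt : (star v ⬝ᵥ (Real.exp x • σ - ρ) *ᵥ v).re < 0 := by
        by_contra hge
        exact hv (complex_nonneg_iff.mpr ⟨not_lt.mp hge, him⟩)
      clear hv
      set a : ℝ := (star v ⬝ᵥ ρ *ᵥ v).re with ha
      set b : ℝ := (star v ⬝ᵥ σ *ᵥ v).re with hb
      have hab : Real.exp x * b < a := by
        have hexp : star v ⬝ᵥ (Real.exp x • σ - ρ) *ᵥ v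
            = (Real.exp x : ℂ) * (star v ⬝ᵥ σ *ᵥ v) - star v ⬝ᵥ ρ *ᵥ v := by
          rw [sub_mulVec, dotProduct_sub, smul_mulVec, dotProduct_smul,
            Complex.real_smul]
        rw [hexp] at hqlt
        simp only [Complex.sub_re, Complex.mul_re, Complex.ofReal_re, Complex.ofReal_im,
          zero_mul, sub_zero] at hqlt
        rw [ha, hb]; linarith
      have hbnn : 0 ≤ b := (complex_nonneg_iff.mp (hσ.dotProduct_mulVec_nonneg v)).1
      have hapos : 0 < a :=
        lt_of_le_of_lt (mul_nonneg (Real.exp_pos x).le hbnn) hab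
      -- project onto support of σ
      set P : Matrix (Fin d) (Fin d) ℂ := suppProj hσ.isHermitian with hP
      have hσP : σ * P = σ := mul_suppProj hσ.isHermitian
      have hρP : ρ * P = ρ := by
        have h1 : σ * (1 - P) = 0 := by rw [Matrix.mul_sub, mul_one, hσP, sub_self]
        have h2 : ρ * (1 - P) = 0 := mul_eq_zero_of_supp h h1
        rw [Matrix.mul_sub, mul_one, sub_eq_zero] at h2
        exact h2.symm
      have hPh : Pᴴ = P := suppProj_herm hσ.isHermitian
      have hPρ : P * ρ = ρ := by
        calc P * ρ = Pᴴ * ρᴴ := by rw [hPh, hρ.isHermitian.eq]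
          _ = (ρ * P)ᴴ := (conjTranspose_mul ρ P).symm
          _ = ρ := by rw [hρP, hρ.isHermitian.eq]
      have hPσ : P * σ = σ := by
        calc P * σ = Pᴴ * σᴴ := by rw [hPh, hσ.isHermitian.eq]
          _ = (σ * P)ᴴ := (conjTranspose_mul σ P).symm
          _ = σ := by rw [hσP, hσ.isHermitian.eq]
      set w : Fin d → ℂ := P *ᵥ v with hw
      have hdot : ∀ A : Matrix (Fin d) (Fin d) ℂ, A * P = A → P * A = A →
          star w ⬝ᵥ A *ᵥ w = star v ⬝ᵥ A *ᵥ v := by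
        intro A h1 h2
        calc star (P *ᵥ v) ⬝ᵥ A *ᵥ (P *ᵥ v)
            = star (P *ᵥ v) ⬝ᵥ (A * P) *ᵥ v := by rw [mulVec_mulVec]
          _ = star (P *ᵥ v) ⬝ᵥ A *ᵥ v := by rw [h1]
          _ = (star v ᵥ* Pᴴ) ⬝ᵥ (A *ᵥ v) := by rw [star_mulVec]
          _ = star v ⬝ᵥ Pᴴ *ᵥ (A *ᵥ v) := by rw [← dotProduct_mulVec]
          _ = star v ⬝ᵥ (P * A) *ᵥ v := by rw [hPh, mulVec_mulVec]
          _ = star v ⬝ᵥ A *ᵥ v := by rw [h2]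
      have hρw : star w ⬝ᵥ ρ *ᵥ w = star v ⬝ᵥ ρ *ᵥ v := hdot ρ hρP hPρ
      have hσw : star w ⬝ᵥ σ *ᵥ w = star v ⬝ᵥ σ *ᵥ v := hdot σ hσP hPσ
      have hwsupp : ∀ u : Fin d → ℂ, σ *ᵥ u = 0 → star w ⬝ᵥ u = 0 := by
        intro u hu
        have hPu : P *ᵥ u = 0 := suppProj_mulVec_eq_zero hσ.isHermitian hu
        calc star w ⬝ᵥ u = (star v ᵥ* Pᴴ) ⬝ᵥ u := by rw [hw, star_mulVec]
          _ = star v ⬝ᵥ Pᴴ *ᵥ u := by rw [← dotProduct_mulVec]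
          _ = 0 := by rw [hPh, hPu, dotProduct_zero]
      have hbpos : 0 < b := by
        rcases lt_or_eq_of_le hbnn with h' | h'
        · exact h'
        · exfalso
          have him0 : (star v ⬝ᵥ σ *ᵥ v).im = 0 := (complex_nonneg_iff.mp (hσ.dotProduct_mulVec_nonneg v)).2
          have hzero : star v ⬝ᵥ σ *ᵥ v = 0 := by
            apply Complex.ext
            · simpa using h'.symm
            · simpa using him0
          have hσv : σ *ᵥ v = 0 := (hσ.dotProduct_mulVec_zero_iff v).mp hzero
          have hρv : ρ *ᵥ v = 0 := h v hσv
          have : a = 0 := by rw [ha, hρv, dotProduct_zero, Complex.zero_re]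
          linarith
      set n : ℂ := star w ⬝ᵥ w with hn
      have hn_nonneg : 0 ≤ n := dotProduct_star_self_nonneg w
      set nr : ℝ := n.re with hnr
      have hnreal : n = (nr : ℂ) := by
        apply Complex.ext
        · simp [hnr]
        · simpa using (complex_nonneg_iff.mp hn_nonneg).2
      have hw0 : w ≠ 0 := by
        intro h0
        have hz : star v ⬝ᵥ σ *ᵥ v = 0 := by rw [← hσw, h0]; simp
        have : b = 0 := by rw [hb, hz, Complex.zero_re]
        linarith
      have hnr_pos : 0 < nr := by
        rcases lt_or_eq_of_le (complex_nonneg_iff.mp hn_nonneg).1 with h' | h'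
        · exact h'
        · exfalso
          have : n = 0 := by rw [hnreal, hnr, ← h', Complex.ofReal_zero]
          exact hw0 (dotProduct_star_self_eq_zero.mp (by rw [← hn]; exact this))
      set τ : Matrix (Fin d) (Fin d) ℂ := ((nr⁻¹ : ℝ) : ℂ) • vecMulVec w (star w) with hτ
      have hτmem : τ ∈ T := by
        refine ⟨psd_smul (psd_vecMulVec w) (inv_nonneg.mpr hnr_pos.le), ?_, ?_⟩
        · have htr : (vecMulVec w (star w)).trace = n := by
            rw [hn]
            simp only [trace, diag_apply, vecMulVec_apply, dotProduct, Pi.star_apply]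
            exact Finset.sum_congr rfl (by intros; ring)
          rw [hτ, trace_smul, htr, hnreal, smul_eq_mul, ← Complex.ofReal_mul,
            inv_mul_cancel₀ hnr_pos.ne', Complex.ofReal_one]
        · intro u hu
          rw [hτ, smul_mulVec, vecMulVec_mulVec', hwsupp u hu, zero_smul, smul_zero]
      have hFa : (ρ * τ).trace = ((nr⁻¹ : ℝ) : ℂ) * (star v ⬝ᵥ ρ *ᵥ v) := by
        rw [hτ, mul_smul_comm, trace_smul, trace_mul_vecMulVec, hρw, smul_eq_mul]
      have hFb : (σ * τ).trace = ((nr⁻¹ : ℝ) : ℂ) * (star v ⬝ᵥ σ *ᵥ v) := by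
        rw [hτ, mul_smul_comm, trace_smul, trace_mul_vecMulVec, hσw, smul_eq_mul]
      have hFre_a : (ρ * τ).trace.re = nr⁻¹ * a := by
        rw [hFa, ha, Complex.ofReal_mul' nr⁻¹ _]
      have hFre_b : (σ * τ).trace.re = nr⁻¹ * b := by
        rw [hFb, hb, Complex.ofReal_mul' nr⁻¹ _]
      have hFτ : ENNReal.ofReal (Real.exp x) ≤ F τ := by
        rw [hF]
        simp only []
        rw [hFre_a, hFre_b]
        have hb2 : 0 < nr⁻¹ * b := by positivity
        rw [ENNReal.le_div_iff_mul_le (Or.inl (by simp [ENNReal.ofReal_eq_zero]; linarith))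
          (Or.inl ENNReal.ofReal_ne_top)]
        rw [← ENNReal.ofReal_mul (Real.exp_pos x).le]
        apply ENNReal.ofReal_le_ofReal
        calc Real.exp x * (nr⁻¹ * b) = nr⁻¹ * (Real.exp x * b) := by ring
          _ ≤ nr⁻¹ * a := mul_le_mul_of_nonneg_left hab.le (inv_nonneg.mpr hnr_pos.le)
      have hsτ : F τ ≤ s := by
        rw [hs]
        exact le_iSup₂ (f := fun τ _ => F τ) τ hτmem
      calc (x : EReal) = ENNReal.log (ENNReal.ofReal (Real.exp x)) := by
            rw [ENNReal.log_ofReal_of_pos (Real.exp_pos x), Real.log_exp]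
        _ ≤ ENNReal.log s := ENNReal.log_monotone (le_trans hFτ hsτ)

    -- combine
    unfold DmaxE
    apply le_antisymm
    · by_contra hcon
      push_neg at hcon
      obtain ⟨x, hx1, hx2⟩ := EReal.exists_between_coe_real hcon
      have hxS : (Real.exp x • σ - ρ).PosSemidef := by
        by_contra hxS
        exact absurd (h_lt x hxS) (not_le.mpr hx1)
      have hmem : ((x : ℝ) : EReal) ∈
          (fun l : ℝ => (l : EReal)) '' {l : ℝ | (Real.exp l • σ - ρ).PosSemidef} :=
        ⟨x, hxS, rfl⟩
      exact absurd (sInf_le hmem) (not_le.mpr hx2)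
    · exact le_sInf (by rintro _ ⟨l, hl, rfl⟩; exact h_ge l hl)
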